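/- If Φ is false, then some state with status UNSAT is reachable from the initial state via the transition rules of basic Incremental Determinization. -/

import Mathlib

/-! Basic framework: variables are `X ⊕ Y` where `X` are the universal and
`Y` the existential variables (this makes `X` and `Y` disjoint by construction). -/

/-- A literal: a variable together with a polarity. -/
abbrev Lit (X Y : Type) := (X ⊕ Y) × Bool

/-- A clause is a finite set of literals. -/
abbrev Clause (X Y : Type) := Finset (Lit X Y)

/-- A (total) assignment to all variables. Assignments "to a set `D` of variables"
are modelled as total assignments; all notions below only inspect the relevant variables. -/
abbrev Assn (X Y : Type) := (X ⊕ Y) → Bool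

/-- An assignment satisfies a literal if it maps its variable to its polarity. -/
def satLit {X Y : Type} (σ : Assn X Y) (l : Lit X Y) : Prop := σ l.1 = l.2

/-- An assignment satisfies a clause if it satisfies at least one of its literals. -/
def satClause {X Y : Type} (σ : Assn X Y) (c : Clause X Y) : Prop := ∃ l ∈ c, satLit σ l

/-- An assignment satisfies a clause set if it satisfies every clause in it. -/
def satCnf {X Y : Type} (σ : Assn X Y) (ψ : Set (Clause X Y)) : Prop := ∀ c ∈ ψ, satClause σ c

/-- The combined assignment `(xa, ya)`. -/
def combine {X Y : Type} (xa : X → Bool) (ya : Y → Bool) : Assn X Y := Sum.elim xa ya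

/-- The restriction of an assignment to the universal variables `X`. -/
def restrX {X Y : Type} (σ : Assn X Y) : X → Bool := fun x => σ (Sum.inl x)

/-- Truth of the 2QBF `∀X.∃Y.φ`: there is a Skolem function `f` such that for every
assignment `xa` to `X` the combined assignment `(xa, f(xa))` satisfies `φ`. -/
def qbfTrue {X Y : Type} (φ : Set (Clause X Y)) : Prop :=
  ∃ f : (X → Bool) → (Y → Bool), ∀ xa : X → Bool, satCnf (combine xa (f xa)) φ

/-- `v` has a unique Skolem function for domain `χ` in `ψ`: for every assignment `xa` to `X`
satisfying `χ` there is exactly one Boolean `b` such that some assignment `ya` to the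
existential variables with `ya v = b` makes `(xa, ya)` satisfy `ψ`. -/
def uniqueSkolem {X Y : Type} (ψ : Set (Clause X Y)) (χ : (X → Bool) → Prop) (v : Y) : Prop :=
  ∀ xa : X → Bool, χ xa →
    ∃! b : Bool, ∃ ya : Y → Bool, ya v = b ∧ satCnf (combine xa ya) ψ

/-- `C|_D`: the clauses of `C` all of whose variables lie in `D`. -/
def restrictC {X Y : Type} (C : Set (Clause X Y)) (D : Set (X ⊕ Y)) : Set (Clause X Y) :=
  {c ∈ C | ∀ l ∈ c, l.1 ∈ D}

/-- Clause `c` has unique consequence `v` relative to `D`: it contains a literal of `v`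
and all its other literals are of variables in `D`. -/
def hasUC {X Y : Type} (c : Clause X Y) (v : Y) (D : Set (X ⊕ Y)) : Prop :=
  (∃ b : Bool, (Sum.inr v, b) ∈ c) ∧ ∀ l ∈ c, l.1 ≠ Sum.inr v → l.1 ∈ D

/-- `U_v`: the clauses of `C` with unique consequence `v` relative to `D`. -/
def UC {X Y : Type} (C : Set (Clause X Y)) (v : Y) (D : Set (X ⊕ Y)) : Set (Clause X Y) :=
  {c ∈ C | hasUC c v D}

/-- `A_(v,b)`: some clause `c` in `U_v` contains the literal `(v, b)` and the assignment
falsifies every literal of `c` other than the literals of `v`. -/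
def Ant {X Y : Type} (C : Set (Clause X Y)) (v : Y) (D : Set (X ⊕ Y)) (b : Bool)
    (σ : Assn X Y) : Prop :=
  ∃ c ∈ UC C v D, (Sum.inr v, b) ∈ c ∧ ∀ l ∈ c, l.1 ≠ Sum.inr v → ¬ satLit σ l

/-- `deterministic(v, C, χ, D)`. -/
def deterministic {X Y : Type} (v : Y) (C : Set (Clause X Y)) (χ : (X → Bool) → Prop)
    (D : Set (X ⊕ Y)) : Prop :=
  ∀ σ : Assn X Y, satCnf σ (restrictC C D) → χ (restrX σ) →
    Ant C v D true σ ∨ Ant C v D false σ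

/-- `unconflicted(v, C, χ, D)`. -/
def unconflicted {X Y : Type} (v : Y) (C : Set (Clause X Y)) (χ : (X → Bool) → Prop)
    (D : Set (X ⊕ Y)) : Prop :=
  ∀ σ : Assn X Y, satCnf σ (restrictC C D) → χ (restrX σ) →
    ¬ (Ant C v D true σ ∧ Ant C v D false σ)

/-- `v` has a unique Skolem function relative to `D` for domain `χ` in `C`: for every
assignment to `D` satisfying `C|_D` whose restriction to `X` satisfies `χ`, there is exactly
one Boolean `b` such that extending the assignment by `v ↦ b` satisfies every clause of `U_v`. -/
def uniqueSkolemRel {X Y : Type} [DecidableEq X] [DecidableEq Y] (v : Y)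
    (C : Set (Clause X Y)) (χ : (X → Bool) → Prop) (D : Set (X ⊕ Y)) : Prop :=
  ∀ σ : Assn X Y, satCnf σ (restrictC C D) → χ (restrX σ) →
    ∃! b : Bool, satCnf (Function.update σ (Sum.inr v) b) (UC C v D)

/-! The state of the Incremental Determinization solver. -/

/-- The solver status. -/
inductive Status (X Y : Type) where
  | ready : Status X Y
  | conflict (L : Clause X Y) (d : Assn X Y) : Status X Y
  | sat : Status X Y
  | unsat : Status X Y

/-- A solver state `(S, C, D, χ, α)`: a status, a stack of clause sets, a stack of sets of
variables, and two predicates on assignments to `X`. -/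
structure IDState (X Y : Type) where
  status : Status X Y
  C : List (Set (Clause X Y))
  D : List (Set (X ⊕ Y))
  chi : (X → Bool) → Prop
  alpha : (X → Bool) → Prop

/-- The union of the elements of a stack of sets. -/
def stackUnion {β : Type} (S : List (Set β)) : Set β := {x | ∃ s ∈ S, x ∈ s}

/-- The first element (index 0) of a stack of sets. -/
def first {β : Type} (S : List (Set β)) : Set β := S.getD 0 ∅

/-- Add an element to the last set of a stack. -/
def addLast {β : Type} : List (Set β) → β → List (Set β)
  | [], v => [{v}]
  | [s], v => [insert v s]
  | s :: t :: rest, v => s :: addLast (t :: rest) v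

/-- Add an element to the first set of a stack. -/
def addFirst {β : Type} : List (Set β) → β → List (Set β)
  | [], x => [{x}]
  | s :: rest, x => insert x s :: rest

/-- The initial state `(Ready, ⟨φ⟩, ⟨X⟩, ⊤, ⊤)`. -/
def initState {X Y : Type} (φ : Set (Clause X Y)) : IDState X Y :=
  ⟨Status.ready, [φ], [Set.range Sum.inl], fun _ => True, fun _ => True⟩

/-- The transition rules of basic Incremental Determinization. -/
inductive Step {X Y : Type} [DecidableEq X] [DecidableEq Y] :
    IDState X Y → IDState X Y → Prop

  | propagate (C : List (Set (Clause X Y))) (D : List (Set (X ⊕ Y)))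
      (χ α : (X → Bool) → Prop) (v : Y)
      (hv : Sum.inr v ∉ stackUnion D)
      (hdet : deterministic v (stackUnion C) (fun xa => χ xa ∧ α xa) (stackUnion D))
      (hunc : unconflicted v (stackUnion C) (fun xa => χ xa ∧ α xa) (stackUnion D)) :
      Step ⟨Status.ready, C, D, χ, α⟩ ⟨Status.ready, C, addLast D (Sum.inr v), χ, α⟩
  | decide (C : List (Set (Clause X Y))) (D : List (Set (X ⊕ Y)))
      (χ α : (X → Bool) → Prop) (v : Y) (δ : Set (Clause X Y))
      (hv : Sum.inr v ∉ stackUnion D) (hδfin : δ.Finite)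
      (hδ : ∀ c ∈ δ, hasUC c v (stackUnion D)) :
      Step ⟨Status.ready, C, D, χ, α⟩ ⟨Status.ready, C ++ [δ], D ++ [∅], χ, α⟩
  | sat (C : List (Set (Clause X Y))) (D : List (Set (X ⊕ Y)))
      (χ : (X → Bool) → Prop)
      (hD : stackUnion D = Set.univ) :
      Step ⟨Status.ready, C, D, χ, fun _ => True⟩ ⟨Status.sat, C, D, χ, fun _ => True⟩
  | conflict (C : List (Set (Clause X Y))) (D : List (Set (X ⊕ Y)))
      (χ α : (X → Bool) → Prop) (v : Y) (σ : Assn X Y)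
      (hv : Sum.inr v ∉ stackUnion D)
      (hsat : satCnf σ (restrictC (stackUnion C) (stackUnion D)))
      (hχ : χ (restrX σ)) (hα : α (restrX σ))
      (ht : Ant (stackUnion C) v (stackUnion D) true σ)
      (hf : Ant (stackUnion C) v (stackUnion D) false σ) :
      Step ⟨Status.ready, C, D, χ, α⟩
        ⟨Status.conflict {(Sum.inr v, true), (Sum.inr v, false)} σ, C, D, χ, α⟩
  | analyze (C : List (Set (Clause X Y))) (D : List (Set (X ⊕ Y)))
      (χ α : (X → Bool) → Prop) (L : Clause X Y) (σ : Assn X Y)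
      (c : Clause X Y) (l : Lit X Y)
      (hc : c ∈ first C) (hl : l ∈ L) (hlc : (l.1, !l.2) ∈ c) :
      Step ⟨Status.conflict L σ, C, D, χ, α⟩
        ⟨Status.conflict (L.erase l ∪ c.erase (l.1, !l.2)) σ, C, D, χ, α⟩
  | learn (C : List (Set (Clause X Y))) (D : List (Set (X ⊕ Y)))
      (χ α : (X → Bool) → Prop) (L : Clause X Y) (σ : Assn X Y)
      (h : ∃ l ∈ L, l.1 ∉ stackUnion D) :
      Step ⟨Status.conflict L σ, C, D, χ, α⟩ ⟨Status.ready, addFirst C L, D, χ, α⟩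
  | unsat (C : List (Set (Clause X Y))) (D : List (Set (X ⊕ Y)))
      (χ α : (X → Bool) → Prop) (L : Clause X Y) (σ : Assn X Y)
      (hvars : ∀ l ∈ L, l.1 ∈ first D)
      (hfals : ∀ l ∈ L, ¬ satLit σ l) :
      Step ⟨Status.conflict L σ, C, D, χ, α⟩ ⟨Status.unsat, C, D, χ, α⟩
  | backtrack (S : Status X Y) (C : List (Set (Clause X Y))) (D : List (Set (X ⊕ Y)))
      (χ α : (X → Bool) → Prop) (k : ℕ) (h0 : 0 < k) (hk : k ≤ C.length) :
      Step ⟨S, C, D, χ, α⟩ ⟨S, C.take k, D.take k, χ, α⟩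

/-- Reachability from the initial state via the basic ID rules. -/
def Reachable {X Y : Type} [DecidableEq X] [DecidableEq Y] (φ : Set (Clause X Y))
    (s : IDState X Y) : Prop :=
  Relation.ReflTransGen Step (initState φ) s


section AuxID

variable {X Y : Type} [DecidableEq X] [DecidableEq Y]

/-- Clauses derivable by resolution on existential pivots. -/
inductive Derivable (φ : Set (Clause X Y)) : Clause X Y → Prop
  | base {c : Clause X Y} : c ∈ φ → Derivable φ c
  | res {c₁ c₂ : Clause X Y} {y : Y} {b : Bool} :
      Derivable φ c₁ → Derivable φ c₂ →
      (Sum.inr y, b) ∈ c₁ → (Sum.inr y, !b) ∈ c₂ →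
      Derivable φ (c₁.erase (Sum.inr y, b) ∪ c₂.erase (Sum.inr y, !b))

lemma lit_eq {l : Lit X Y} {w : X ⊕ Y} (h : l.1 = w) : l = (w, l.2) := by
  rw [← h]

lemma complete_aux (φ : Set (Clause X Y)) (xa : X → Bool) :
    ∀ (V : Finset Y) (ψ : Set (Clause X Y)),
      (∀ c ∈ ψ, Derivable φ c) →
      (∀ c ∈ ψ, ∀ l ∈ c, ∀ y : Y, l.1 = Sum.inr y → y ∈ V) →
      (∀ ya : Y → Bool, ¬ satCnf (combine xa ya) ψ) →
      ∃ L : Clause X Y, Derivable φ L ∧ (∀ l ∈ L, ∀ y : Y, l.1 ≠ Sum.inr y) ∧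
        (∀ l ∈ L, ¬ satLit (combine xa (fun _ => true)) l) := by
  intro V
  induction V using Finset.strongInduction with
  | _ V ih =>
    intro ψ hder hvars hunsat
    rcases V.eq_empty_or_nonempty with rfl | ⟨y, hy⟩
    · have h0 := hunsat (fun _ => true)
      rw [satCnf] at h0; push_neg at h0
      obtain ⟨c, hc, hns⟩ := h0
      refine ⟨c, hder c hc, ?_, ?_⟩
      · intro l hl y hy
        exact absurd (hvars c hc l hl y hy) (Finset.notMem_empty y)
      · intro l hl hs
        exact hns ⟨l, hl, hs⟩
    · set ψ' : Set (Clause X Y) :=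
        {c | (c ∈ ψ ∧ (Sum.inr y, true) ∉ c ∧ (Sum.inr y, false) ∉ c) ∨
          ∃ c₁ ∈ ψ, ∃ c₂ ∈ ψ, (Sum.inr y, true) ∈ c₁ ∧ (Sum.inr y, false) ∈ c₂ ∧
            (Sum.inr y, false) ∉ c₁ ∧ (Sum.inr y, true) ∉ c₂ ∧
            c = c₁.erase (Sum.inr y, true) ∪ c₂.erase (Sum.inr y, false)} with hψ'
      apply ih (V.erase y) (Finset.erase_ssubset hy) ψ'
      · rintro c (⟨hc, -, -⟩ | ⟨c₁, hc₁, c₂, hc₂, m₁, m₂, -, -, rfl⟩)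
        · exact hder c hc
        · have := Derivable.res (y := y) (b := true) (hder c₁ hc₁) (hder c₂ hc₂) m₁
            (by simpa using m₂)
          simpa using this
      · rintro c (⟨hc, hT, hF⟩ | ⟨c₁, hc₁, c₂, hc₂, m₁, m₂, nF₁, nT₂, rfl⟩) l hl y' hy'
        · refine Finset.mem_erase.mpr ⟨?_, hvars c hc l hl y' hy'⟩
          intro he
          have hpl : l = (Sum.inr y, l.2) := lit_eq (by rw [hy', he])
          cases hb : l.2
          · exact hF (by rw [hb] at hpl; rw [← hpl]; exact hl)
          · exact hT (by rw [hb] at hpl; rw [← hpl]; exact hl)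
        · rcases Finset.mem_union.mp hl with hl' | hl'
          · obtain ⟨hne, hlc⟩ := Finset.mem_erase.mp hl'
            refine Finset.mem_erase.mpr ⟨?_, hvars c₁ hc₁ l hlc y' hy'⟩
            intro he
            have hpl : l = (Sum.inr y, l.2) := lit_eq (by rw [hy', he])
            cases hb : l.2
            · exact nF₁ (by rw [hb] at hpl; rw [← hpl]; exact hlc)
            · exact hne (by rw [hb] at hpl; exact hpl)
          · obtain ⟨hne, hlc⟩ := Finset.mem_erase.mp hl'
            refine Finset.mem_erase.mpr ⟨?_, hvars c₂ hc₂ l hlc y' hy'⟩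
            intro he
            have hpl : l = (Sum.inr y, l.2) := lit_eq (by rw [hy', he])
            cases hb : l.2
            · exact hne (by rw [hb] at hpl; exact hpl)
            · exact nT₂ (by rw [hb] at hpl; rw [← hpl]; exact hlc)
      · intro ya hsat'
        set σ : Assn X Y := combine xa ya with hσ
        by_cases hbT : ∃ c ∈ ψ, (Sum.inr y, true) ∈ c ∧ (Sum.inr y, false) ∉ c ∧
            ∀ l ∈ c, l ≠ (Sum.inr y, true) → ¬ satLit σ l
        · -- y is forced to true
          set ya' : Y → Bool := fun z => if z = y then true else ya z with hya'
          apply hunsat ya'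
          intro c hc
          have hagree : ∀ l : Lit X Y, l.1 ≠ Sum.inr y →
              (satLit (combine xa ya') l ↔ satLit σ l) := by
            intro l hne
            rcases l with ⟨w, p⟩
            rcases w with x | z
            · simp [satLit, combine, hσ]
            · have hzy : z ≠ y := by rintro rfl; exact hne rfl
              simp [satLit, combine, hσ, hya', hzy]
          by_cases hT : (Sum.inr y, true) ∈ c
          · exact ⟨(Sum.inr y, true), hT, by simp [satLit, combine, hya']⟩
          · by_cases hF : (Sum.inr y, false) ∈ c
            · obtain ⟨c₁, hc₁, m₁, nF₁, hfals₁⟩ := hbT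
              by_cases hcF : ∀ l ∈ c, l ≠ (Sum.inr y, false) → ¬ satLit σ l
              · exfalso
                have hres : c₁.erase (Sum.inr y, true) ∪ c.erase (Sum.inr y, false) ∈ ψ' :=
                  Or.inr ⟨c₁, hc₁, c, hc, m₁, hF, nF₁, hT, rfl⟩
                obtain ⟨l, hl, hsl⟩ := hsat' _ hres
                rcases Finset.mem_union.mp hl with hl' | hl'
                · obtain ⟨hne, hlc⟩ := Finset.mem_erase.mp hl'
                  exact hfals₁ l hlc hne hsl
                · obtain ⟨hne, hlc⟩ := Finset.mem_erase.mp hl'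
                  exact hcF l hlc hne hsl
              · push_neg at hcF
                obtain ⟨l, hl, hne, hsl⟩ := hcF
                have hnv : l.1 ≠ Sum.inr y := by
                  intro hpl
                  have hpe : l = (Sum.inr y, l.2) := lit_eq hpl
                  cases hb : l.2
                  · exact hne (by rw [hb] at hpe; exact hpe)
                  · exact hT (by rw [hb] at hpe; rw [← hpe]; exact hl)
                exact ⟨l, hl, (hagree l hnv).mpr hsl⟩
            · have hc' : c ∈ ψ' := Or.inl ⟨hc, hT, hF⟩
              obtain ⟨l, hl, hsl⟩ := hsat' c hc'
              have hnv : l.1 ≠ Sum.inr y := by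
                intro hpl
                have hpe : l = (Sum.inr y, l.2) := lit_eq hpl
                cases hb : l.2
                · exact hF (by rw [hb] at hpe; rw [← hpe]; exact hl)
                · exact hT (by rw [hb] at hpe; rw [← hpe]; exact hl)
              exact ⟨l, hl, (hagree l hnv).mpr hsl⟩
        · -- y is not forced to true: set it false
          set ya' : Y → Bool := fun z => if z = y then false else ya z with hya'
          apply hunsat ya'
          intro c hc
          have hagree : ∀ l : Lit X Y, l.1 ≠ Sum.inr y →
              (satLit (combine xa ya') l ↔ satLit σ l) := by
            intro l hne
            rcases l with ⟨w, p⟩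
            rcases w with x | z
            · simp [satLit, combine, hσ]
            · have hzy : z ≠ y := by rintro rfl; exact hne rfl
              simp [satLit, combine, hσ, hya', hzy]
          by_cases hF : (Sum.inr y, false) ∈ c
          · exact ⟨(Sum.inr y, false), hF, by simp [satLit, combine, hya']⟩
          · by_cases hT : (Sum.inr y, true) ∈ c
            · push_neg at hbT
              obtain ⟨l, hl, hne, hsl⟩ := hbT c hc hT hF
              have hnv : l.1 ≠ Sum.inr y := by
                intro hpl
                have hpe : l = (Sum.inr y, l.2) := lit_eq hpl
                cases hb : l.2
                · exact hF (by rw [hb] at hpe; rw [← hpe]; exact hl)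
                · exact hne (by rw [hb] at hpe; exact hpe)
              exact ⟨l, hl, (hagree l hnv).mpr hsl⟩
            · have hc' : c ∈ ψ' := Or.inl ⟨hc, hT, hF⟩
              obtain ⟨l, hl, hsl⟩ := hsat' c hc'
              have hnv : l.1 ≠ Sum.inr y := by
                intro hpl
                have hpe : l = (Sum.inr y, l.2) := lit_eq hpl
                cases hb : l.2
                · exact hF (by rw [hb] at hpe; rw [← hpe]; exact hl)
                · exact hT (by rw [hb] at hpe; rw [← hpe]; exact hl)
              exact ⟨l, hl, (hagree l hnv).mpr hsl⟩


/-! Solver simulation machinery -/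

lemma mem_stackUnion {β : Type} {x : β} {S : List (Set β)} :
    x ∈ stackUnion S ↔ ∃ s ∈ S, x ∈ s := Iff.rfl

lemma stackUnion_cons {β : Type} (s : Set β) (t : List (Set β)) :
    stackUnion (s :: t) = s ∪ stackUnion t := by
  ext x
  simp only [mem_stackUnion, List.mem_cons, Set.mem_union]
  constructor
  · rintro ⟨u, (rfl | hu), hx⟩
    · exact Or.inl hx
    · exact Or.inr ⟨u, hu, hx⟩
  · rintro (hx | ⟨u, hu, hx⟩)
    · exact ⟨s, Or.inl rfl, hx⟩
    · exact ⟨u, Or.inr hu, hx⟩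

lemma stackUnion_nil {β : Type} : stackUnion ([] : List (Set β)) = ∅ := by
  ext x; simp [mem_stackUnion]

lemma stackUnion_empties {β γ : Type} (l : List γ) :
    stackUnion (l.map (fun _ => (∅ : Set β))) = ∅ := by
  induction l with
  | nil => simp [stackUnion_nil]
  | cons a t ih => rw [List.map_cons, stackUnion_cons, ih, Set.union_empty]

/-- The clause set containing, for existential variable `y`, the two unit clauses. -/
def dd (y : Y) : Set (Clause X Y) :=
  {({(Sum.inr y, true)} : Clause X Y), ({(Sum.inr y, false)} : Clause X Y)}

/-- A literal of an existential variable occurs in the clause. -/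
def hasYlit (c : Clause X Y) : Prop := ∃ l ∈ c, ∃ y : Y, l.1 = Sum.inr y

/-- Invariant on `Ready` states used in the simulation. -/
def Good (φ : Set (Clause X Y)) (C : List (Set (Clause X Y)))
    (D : List (Set (X ⊕ Y))) : Prop :=
  C ≠ [] ∧ first D = Set.range Sum.inl ∧ stackUnion D = Set.range Sum.inl ∧
  φ ⊆ first C ∧ (∀ c ∈ stackUnion C, hasYlit c) ∧
  (∀ (y : Y) (b : Bool), ({(Sum.inr y, b)} : Clause X Y) ∈ stackUnion C)

lemma satCnf_restrict {C : List (Set (Clause X Y))} (σ : Assn X Y)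
    (h : ∀ c ∈ stackUnion C, hasYlit c) :
    satCnf σ (restrictC (stackUnion C) (Set.range Sum.inl)) := by
  intro c hc
  obtain ⟨hcC, hall⟩ := hc
  obtain ⟨l, hl, y, hy⟩ := h c hcC
  have := hall l hl
  rw [hy] at this
  obtain ⟨x, hx⟩ := this
  exact absurd hx (by simp)

lemma ant_unit {C : List (Set (Clause X Y))} {y : Y} {b : Bool} (σ : Assn X Y)
    (hU : ({(Sum.inr y, b)} : Clause X Y) ∈ stackUnion C) :
    Ant (stackUnion C) y (Set.range Sum.inl) b σ := by
  refine ⟨{(Sum.inr y, b)}, ⟨hU, ⟨b, Finset.mem_singleton_self _⟩, ?_⟩,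
    Finset.mem_singleton_self _, ?_⟩
  · intro l hl hne
    exact absurd (congrArg Prod.fst (Finset.mem_singleton.mp hl)) hne
  · intro l hl hne _
    exact hne (congrArg Prod.fst (Finset.mem_singleton.mp hl))

/-- One conflict/analyze/analyze episode producing the resolvent as conflict clause. -/
lemma episode (φ : Set (Clause X Y)) {C : List (Set (Clause X Y))}
    {D : List (Set (X ⊕ Y))} (hG : Good φ C D) (σ : Assn X Y)
    {c₁ c₂ : Clause X Y} {y : Y} {b : Bool}
    (h1 : c₁ ∈ first C) (h2 : c₂ ∈ first C)
    (m1 : (Sum.inr y, b) ∈ c₁) (m2 : (Sum.inr y, !b) ∈ c₂) :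
    Relation.ReflTransGen Step
      (⟨Status.ready, C, D, fun _ => True, fun _ => True⟩ : IDState X Y)
      ⟨Status.conflict (c₁.erase (Sum.inr y, b) ∪ c₂.erase (Sum.inr y, !b)) σ,
        C, D, fun _ => True, fun _ => True⟩ := by
  obtain ⟨hCne, hD1, hDU, hφ, hYl, hunits⟩ := hG
  have hv : Sum.inr y ∉ stackUnion D := by rw [hDU]; simp
  have step1 : Step (⟨Status.ready, C, D, fun _ => True, fun _ => True⟩ : IDState X Y)
      ⟨Status.conflict {(Sum.inr y, true), (Sum.inr y, false)} σ, C, D,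
        fun _ => True, fun _ => True⟩ := by
    refine Step.conflict C D _ _ y σ hv ?_ trivial trivial ?_ ?_
    · rw [hDU]; exact satCnf_restrict σ hYl
    · rw [hDU]; exact ant_unit σ (hunits y true)
    · rw [hDU]; exact ant_unit σ (hunits y false)
  -- first analyze: load c₁
  have hl1 : ((Sum.inr y, !b) : Lit X Y) ∈
      ({(Sum.inr y, true), (Sum.inr y, false)} : Clause X Y) := by
    cases b <;> simp
  have e1 : ({(Sum.inr y, true), (Sum.inr y, false)} : Clause X Y).erase (Sum.inr y, !b) ∪
      c₁.erase (Sum.inr y, b) = c₁ := by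
    ext a
    simp only [Finset.mem_union, Finset.mem_erase, Finset.mem_insert, Finset.mem_singleton]
    constructor
    · rintro (⟨hne, (rfl | rfl)⟩ | ⟨-, ha⟩)
      · cases b
        · exact absurd rfl hne
        · exact m1
      · cases b
        · exact m1
        · exact absurd rfl hne
      · exact ha
    · intro ha
      by_cases he : a = ((Sum.inr y, b) : Lit X Y)
      · subst he
        refine Or.inl ⟨?_, ?_⟩
        · cases b <;> simp
        · cases b <;> simp
      · exact Or.inr ⟨he, ha⟩
  have step2 : Step
      (⟨Status.conflict {(Sum.inr y, true), (Sum.inr y, false)} σ, C, D,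
        fun _ => True, fun _ => True⟩ : IDState X Y)
      ⟨Status.conflict c₁ σ, C, D, fun _ => True, fun _ => True⟩ := by
    have := Step.analyze C D (fun _ => True) (fun _ => True)
      ({(Sum.inr y, true), (Sum.inr y, false)} : Clause X Y) σ c₁
      ((Sum.inr y, !b) : Lit X Y) h1 hl1 (by simpa using m1)
    rwa [show ((((Sum.inr y, !b) : Lit X Y)).1, !(((Sum.inr y, !b) : Lit X Y)).2)
      = ((Sum.inr y, b) : Lit X Y) by simp, e1] at this
  -- second analyze: resolve with c₂
  have e2 : c₁.erase ((Sum.inr y, b) : Lit X Y) ∪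
      c₂.erase (((Sum.inr y, b) : Lit X Y).1, !((Sum.inr y, b) : Lit X Y).2) =
      c₁.erase (Sum.inr y, b) ∪ c₂.erase (Sum.inr y, !b) := rfl
  have step3 : Step
      (⟨Status.conflict c₁ σ, C, D, fun _ => True, fun _ => True⟩ : IDState X Y)
      ⟨Status.conflict (c₁.erase (Sum.inr y, b) ∪ c₂.erase (Sum.inr y, !b)) σ, C, D,
        fun _ => True, fun _ => True⟩ := by
    have := Step.analyze C D (fun _ => True) (fun _ => True) c₁ σ c₂
      ((Sum.inr y, b) : Lit X Y) h2 m1 (by simpa using m2)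
    rwa [e2] at this
  exact ((Relation.ReflTransGen.refl.tail step1).tail step2).tail step3

lemma good_addFirst (φ : Set (Clause X Y)) {C : List (Set (Clause X Y))}
    {D : List (Set (X ⊕ Y))} (hG : Good φ C D) {c : Clause X Y} (hY : hasYlit c) :
    Good φ (addFirst C c) D ∧ first (addFirst C c) = insert c (first C) := by
  obtain ⟨hCne, hD1, hDU, hφ, hYl, hunits⟩ := hG
  obtain ⟨s, t, rfl⟩ : ∃ s t, C = s :: t := by
    cases C with
    | nil => exact absurd rfl hCne
    | cons s t => exact ⟨s, t, rfl⟩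
  have hsu : stackUnion (insert c s :: t) = insert c (stackUnion (s :: t)) := by
    rw [stackUnion_cons, stackUnion_cons, Set.insert_union]
  constructor
  · refine ⟨by simp [addFirst], hD1, hDU, ?_, ?_, ?_⟩
    · intro d hd
      exact Set.mem_insert_iff.mpr (Or.inr (hφ hd))
    · intro d hd
      rw [show addFirst (s :: t) c = insert c s :: t from rfl, hsu] at hd
      rcases Set.mem_insert_iff.mp hd with rfl | hd
      · exact hY
      · exact hYl d hd
    · intro y b
      rw [show addFirst (s :: t) c = insert c s :: t from rfl, hsu]
      exact Set.mem_insert_iff.mpr (Or.inr (hunits y b))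
  · rfl

/-- Any derivable clause with an existential literal can be learned. -/
lemma learn_reach (φ : Set (Clause X Y)) {c : Clause X Y} (hd : Derivable φ c) :
    hasYlit c → ∀ C D, Good φ C D →
    ∃ C', Relation.ReflTransGen Step
        (⟨Status.ready, C, D, fun _ => True, fun _ => True⟩ : IDState X Y)
        ⟨Status.ready, C', D, fun _ => True, fun _ => True⟩ ∧
      Good φ C' D ∧ c ∈ first C' ∧ first C ⊆ first C' := by
  induction hd with
  | base h =>
    intro _ C D hG
    exact ⟨C, Relation.ReflTransGen.refl, hG, hG.2.2.2.1 h, subset_rfl⟩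
  | @res c₁ c₂ y b hd1 hd2 m1 m2 ih1 ih2 =>
    intro hY C D hG
    obtain ⟨C₁, r1, hG1, hc1, mono1⟩ := ih1 ⟨(Sum.inr y, b), m1, y, rfl⟩ C D hG
    obtain ⟨C₂, r2, hG2, hc2, mono2⟩ := ih2 ⟨(Sum.inr y, !b), m2, y, rfl⟩ C₁ D hG1
    have hc1' : c₁ ∈ first C₂ := mono2 hc1
    have ep := episode φ hG2 (fun _ => true) hc1' hc2 m1 m2
    have hlearn : Step
        (⟨Status.conflict (c₁.erase (Sum.inr y, b) ∪ c₂.erase (Sum.inr y, !b))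
          (fun _ => true), C₂, D, fun _ => True, fun _ => True⟩ : IDState X Y)
        ⟨Status.ready, addFirst C₂ (c₁.erase (Sum.inr y, b) ∪ c₂.erase (Sum.inr y, !b)),
          D, fun _ => True, fun _ => True⟩ := by
      refine Step.learn C₂ D _ _ _ _ ?_
      obtain ⟨l, hl, y', hy'⟩ := hY
      refine ⟨l, hl, ?_⟩
      rw [hG2.2.2.1, hy']
      simp
    obtain ⟨hG3, hfirst⟩ := good_addFirst φ hG2 hY
    refine ⟨addFirst C₂ (c₁.erase (Sum.inr y, b) ∪ c₂.erase (Sum.inr y, !b)),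
      (r1.trans r2).trans (ep.tail hlearn), hG3, ?_, ?_⟩
    · rw [hfirst]; exact Set.mem_insert _ _
    · rw [hfirst]
      exact (mono1.trans mono2).trans (Set.subset_insert _ _)


lemma hasUC_unit (y : Y) (b : Bool) (D : Set (X ⊕ Y)) :
    hasUC ({(Sum.inr y, b)} : Clause X Y) y D := by
  refine ⟨⟨b, Finset.mem_singleton_self _⟩, ?_⟩
  intro l hl hne
  exact absurd (congrArg Prod.fst (Finset.mem_singleton.mp hl)) hne

lemma stackUnion_D (l : List Y) :
    stackUnion ((Set.range Sum.inl : Set (X ⊕ Y)) :: l.map (fun _ => (∅ : Set (X ⊕ Y)))) =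
      Set.range Sum.inl := by
  rw [stackUnion_cons, stackUnion_empties, Set.union_empty]

lemma decide_all (φ : Set (Clause X Y)) (l : List Y) :
    Relation.ReflTransGen Step (initState φ)
      (⟨Status.ready, φ :: l.map dd,
        (Set.range Sum.inl : Set (X ⊕ Y)) :: l.map (fun _ => (∅ : Set (X ⊕ Y))),
        fun _ => True, fun _ => True⟩ : IDState X Y) := by
  induction l using List.reverseRecOn with
  | nil => exact Relation.ReflTransGen.refl
  | append_singleton l y ih =>
    refine ih.tail ?_
    have hstep := Step.decide (φ :: l.map dd)
      ((Set.range Sum.inl : Set (X ⊕ Y)) :: l.map (fun _ => (∅ : Set (X ⊕ Y))))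
      (fun _ => True) (fun _ => True) y (dd y)
      (by rw [stackUnion_D]; simp)
      ((Set.finite_singleton _).insert _)
      (by
        intro c hc
        rcases hc with rfl | hc
        · exact hasUC_unit y true _
        · rw [Set.mem_singleton_iff] at hc
          subst hc
          exact hasUC_unit y false _)
    have e1 : (φ :: l.map dd) ++ [dd y] = φ :: (l ++ [y]).map dd := by
      simp
    have e2 : ((Set.range Sum.inl : Set (X ⊕ Y)) ::
        l.map (fun _ => (∅ : Set (X ⊕ Y)))) ++ [∅] =
        (Set.range Sum.inl : Set (X ⊕ Y)) :: (l ++ [y]).map (fun _ => (∅ : Set (X ⊕ Y))) := by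
      simp
    rwa [e1, e2] at hstep

lemma good_init (φ : Set (Clause X Y)) [Fintype Y]
    (hφY : ∀ c ∈ φ, hasYlit c) :
    Good φ (φ :: ((Finset.univ : Finset Y).toList).map dd)
      ((Set.range Sum.inl : Set (X ⊕ Y)) ::
        ((Finset.univ : Finset Y).toList).map (fun _ => (∅ : Set (X ⊕ Y)))) := by
  refine ⟨List.cons_ne_nil _ _, rfl, stackUnion_D _, subset_rfl, ?_, ?_⟩
  · intro c hc
    rw [stackUnion_cons] at hc
    rcases hc with hc | hc
    · exact hφY c hc
    · obtain ⟨s, hs, hcs⟩ := hc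
      obtain ⟨y, -, rfl⟩ := List.mem_map.mp hs
      rcases hcs with rfl | hcs
      · exact ⟨(Sum.inr y, true), Finset.mem_singleton_self _, y, rfl⟩
      · rw [Set.mem_singleton_iff] at hcs
        subst hcs
        exact ⟨(Sum.inr y, false), Finset.mem_singleton_self _, y, rfl⟩
  · intro y b
    rw [stackUnion_cons]
    refine Or.inr ⟨dd y, List.mem_map_of_mem (f := dd) (Finset.mem_toList.mpr (Finset.mem_univ y)), ?_⟩
    cases b
    · exact Or.inr rfl
    · exact Or.inl rfl

end AuxID

/-- If Φ is false, some state with status UNSAT is reachable via basic ID. -/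
theorem stmt_7 {X Y : Type} [Fintype X] [Fintype Y] [DecidableEq X] [DecidableEq Y]
    (φ : Set (Clause X Y)) (hφfin : φ.Finite)
    (hφY : ∀ c ∈ φ, ∃ l ∈ c, ∃ y : Y, l.1 = Sum.inr y)
    (hfalse : ¬ qbfTrue φ) :
    ∃ s : IDState X Y, Reachable φ s ∧ s.status = Status.unsat := by
  obtain ⟨xa, hxa⟩ : ∃ xa : X → Bool, ∀ ya : Y → Bool, ¬ satCnf (combine xa ya) φ := by
    by_contra h
    push_neg at h
    exact hfalse ⟨fun xb => (h xb).choose, fun xb => (h xb).choose_spec⟩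
  obtain ⟨L, hder, hXonly, hfals⟩ := complete_aux φ xa Finset.univ φ
    (fun c hc => Derivable.base hc)
    (fun c hc l hl y hy => Finset.mem_univ y) hxa
  cases hder with
  | base h =>
    obtain ⟨l, hl, y, hy⟩ := hφY L h
    exact absurd hy (hXonly l hl y)
  | @res c₁ c₂ y b hd1 hd2 m1 m2 =>
    set l0 := ((Finset.univ : Finset Y).toList) with hl0
    have r0 := decide_all φ l0
    have hG0 := good_init φ hφY
    obtain ⟨C₁, r1, hG1, hc1, mono1⟩ := learn_reach φ hd1 ⟨(Sum.inr y, b), m1, y, rfl⟩ _ _ hG0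
    obtain ⟨C₂, r2, hG2, hc2, mono2⟩ := learn_reach φ hd2 ⟨(Sum.inr y, !b), m2, y, rfl⟩ _ _ hG1
    have ep := episode φ hG2 (combine xa (fun _ => true)) (mono2 hc1) hc2 m1 m2
    have ustep := Step.unsat C₂
      ((Set.range Sum.inl : Set (X ⊕ Y)) :: l0.map (fun _ => (∅ : Set (X ⊕ Y))))
      (fun _ => True) (fun _ => True)
      (c₁.erase (Sum.inr y, b) ∪ c₂.erase (Sum.inr y, !b)) (combine xa (fun _ => true))
      (by
        intro l hl
        rw [hG2.2.1]
        cases hpl : l.1 with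
        | inl x => exact ⟨x, rfl⟩
        | inr y' => exact absurd hpl (hXonly l hl y'))
      hfals
    exact ⟨_, (((r0.trans r1).trans r2).trans ep).tail ustep, rfl⟩
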